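/- The Rogers-Veraart vulnerabilities are bounded above by the cyclic DebtRank vulnerabilities at all times: h_i^{RV}(t) ≤ h_i^{cDR}(t) for all banks i and all t ≥ 1, hence H^{RV}(∞) ≤ H^{cDR}(∞). -/

import Mathlib

/-- Rogers-Veraart vulnerabilities are bounded above by cyclic DebtRank
vulnerabilities at all times t ≥ 1, hence H^RV ≤ H^cDR (in particular at convergence). -/
theorem rv_vulnerability_le_cdr_vulnerability
    (n : ℕ) (l : Matrix (Fin n) (Fin n) ℝ) (hl : ∀ i j, 0 ≤ l i j)
    (le s pbar E0 : Fin n → ℝ) (hpbar : ∀ j, 0 < pbar j) (hE0 : ∀ i, 0 < E0 i)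
    (p : ℕ → Fin n → ℝ) (hp : ∀ t j, p t j ∈ Set.Icc 0 (pbar j))
    (hRV hcDR : ℕ → Fin n → ℝ)
    (hRV0 : ∀ i, hRV 0 i = 0) (hcDR0 : ∀ i, hcDR 0 i = 0)
    (hRV1 : ∀ i, hRV 1 i = min 1 (le i * s i))
    (hcDR1 : ∀ i, hcDR 1 i = min 1 (le i * s i))
    (h1mem : ∀ i, min 1 (le i * s i) ∈ Set.Icc (0:ℝ) 1)
    (hcupd : ∀ t, 1 ≤ t → ∀ i, hcDR (t+1) i =
      min 1 (hcDR t i + ∑ j, l i j * (hcDR t j - hcDR (t-1) j)))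
    (hRVbound : ∀ t i, hRV t i ∈ Set.Icc (0:ℝ) 1)
    (hRVupd : ∀ t, 1 ≤ t → ∀ i, hRV t i < 1 →
      hRV (t+1) i = min 1 (hRV 1 i + ∑ j, l i j * ((pbar j - p t j) / pbar j)))
    (hRVdefault : ∀ t i, hRV t i = 1 → hRV (t+1) i = 1)
    (hfullpay : ∀ t, 1 ≤ t → ∀ j, hRV t j < 1 → p t j = pbar j) :
    (∀ t, 1 ≤ t → ∀ i, hRV t i ≤ hcDR t i) ∧
    (∀ t, 1 ≤ t →
      (∑ i, E0 i * hRV t i) / (∑ i, E0 i) ≤ (∑ i, E0 i * hcDR t i) / (∑ i, E0 i)) := by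
  -- Basic facts about cDR: nonneg, bounded by 1, monotone in t.
  have key : ∀ t, ∀ i, 0 ≤ hcDR t i ∧ hcDR t i ≤ 1 ∧ hcDR t i ≤ hcDR (t+1) i := by
    intro t
    induction t with
    | zero =>
      intro i
      rw [hcDR0 i, hcDR1 i]
      exact ⟨le_rfl, zero_le_one, (h1mem i).1⟩
    | succ t ih =>
      intro i
      have hub : hcDR (t+1) i ≤ 1 := by
        cases t with
        | zero => rw [hcDR1 i]; exact (h1mem i).2
        | succ u =>
          rw [hcupd (u+1) (by omega) i]
          exact min_le_left _ _
      have hlb : 0 ≤ hcDR (t+1) i := le_trans (ih i).1 (ih i).2.2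
      have hsum : 0 ≤ ∑ j, l i j * (hcDR (t+1) j - hcDR t j) :=
        Finset.sum_nonneg fun j _ => mul_nonneg (hl i j) (sub_nonneg.2 (ih j).2.2)
      have hupd := hcupd (t+1) (by omega) i
      have he : t + 1 - 1 = t := by omega
      rw [he] at hupd
      refine ⟨hlb, hub, ?_⟩
      rw [hupd]
      exact le_min hub (by linarith)
  -- Telescoped lower bound for cDR.
  have claimB : ∀ t, 1 ≤ t → ∀ i,
      min 1 (hcDR 1 i + ∑ j, l i j * hcDR t j) ≤ hcDR (t+1) i := by
    intro t ht
    induction t, ht using Nat.le_induction with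
    | base =>
      intro i
      have hupd := hcupd 1 le_rfl i
      simp only [Nat.sub_self] at hupd
      have hs : ∑ j, l i j * (hcDR 1 j - hcDR 0 j) = ∑ j, l i j * hcDR 1 j :=
        Finset.sum_congr rfl fun j _ => by rw [hcDR0 j]; ring
      rw [hupd, hs]
    | succ t ht ih =>
      intro i
      have hupd := hcupd (t+1) (by omega) i
      have he : t + 1 - 1 = t := by omega
      rw [he] at hupd
      have hsum : 0 ≤ ∑ j, l i j * (hcDR (t+1) j - hcDR t j) :=
        Finset.sum_nonneg fun j _ => mul_nonneg (hl i j) (sub_nonneg.2 (key t j).2.2)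
      have hsplit : ∑ j, l i j * hcDR (t+1) j
          = ∑ j, l i j * hcDR t j + ∑ j, l i j * (hcDR (t+1) j - hcDR t j) := by
        rw [← Finset.sum_add_distrib]
        exact Finset.sum_congr rfl fun j _ => by ring
      rcases lt_or_ge (hcDR (t+1) i) 1 with hlt | hge
      · have hmlt : min 1 (hcDR 1 i + ∑ j, l i j * hcDR t j) < 1 :=
          lt_of_le_of_lt (ih i) hlt
        have hXlt : hcDR 1 i + ∑ j, l i j * hcDR t j < 1 := by
          rcases min_lt_iff.mp hmlt with h | h
          · exact absurd h (lt_irrefl 1)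
          · exact h
        have hX : hcDR 1 i + ∑ j, l i j * hcDR t j ≤ hcDR (t+1) i := by
          have := ih i
          rwa [min_eq_right (le_of_lt hXlt)] at this
        rw [hupd]
        refine min_le_min le_rfl ?_
        rw [hsplit]
        linarith
      · rw [hupd]
        exact le_trans (min_le_left _ _) (le_min le_rfl (by linarith))
  -- Main comparison.
  have main : ∀ t, 1 ≤ t → ∀ i, hRV t i ≤ hcDR t i := by
    intro t ht
    induction t, ht using Nat.le_induction with
    | base => intro i; rw [hRV1 i, hcDR1 i]
    | succ t ht ih =>
      intro i
      rcases eq_or_lt_of_le (hRVbound t i).2 with hdef | hlt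
      · rw [hRVdefault t i hdef]
        have h1 : hcDR t i = 1 :=
          le_antisymm (key t i).2.1 (by rw [← hdef]; exact ih i)
        have hmono : ∀ j, hcDR (t-1) j ≤ hcDR t j := fun j => by
          have h := (key (t-1) j).2.2
          rwa [Nat.sub_add_cancel ht] at h
        have hsum : 0 ≤ ∑ j, l i j * (hcDR t j - hcDR (t-1) j) :=
          Finset.sum_nonneg fun j _ => mul_nonneg (hl i j) (sub_nonneg.2 (hmono j))
        rw [hcupd t ht i, h1]
        exact le_min le_rfl (by linarith)
      · rw [hRVupd t ht i hlt]
        refine le_trans ?_ (claimB t ht i)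
        rw [hRV1 i, ← hcDR1 i]
        refine min_le_min le_rfl (add_le_add le_rfl ?_)
        refine Finset.sum_le_sum fun j _ => mul_le_mul_of_nonneg_left ?_ (hl i j)
        rcases eq_or_lt_of_le (hRVbound t j).2 with hd | hl1
        · have hr1 : (pbar j - p t j) / pbar j ≤ 1 := by
            rw [div_le_one (hpbar j)]
            have := (hp t j).1
            linarith
          have hc1 : hcDR t j = 1 :=
            le_antisymm (key t j).2.1 (by rw [← hd]; exact ih j)
          linarith
        · have hz : (pbar j - p t j) / pbar j = 0 := by
            rw [hfullpay t ht j hl1]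
            simp
          rw [hz]
          exact (key t j).1
  refine ⟨main, fun t ht => ?_⟩
  rcases Nat.eq_zero_or_pos n with h0 | hn
  · subst h0; simp
  · haveI : Nonempty (Fin n) := Fin.pos_iff_nonempty.mp hn
    have hE : 0 < ∑ i, E0 i := Finset.sum_pos (fun i _ => hE0 i) Finset.univ_nonempty
    have hnum : ∑ i, E0 i * hRV t i ≤ ∑ i, E0 i * hcDR t i :=
      Finset.sum_le_sum fun i _ =>
        mul_le_mul_of_nonneg_left (main t ht i) (hE0 i).le
    exact div_le_div_of_nonneg_right hnum hE.le
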